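/- Let σ_R² > 0, and let y_j = σ_j²/σ_R² > 0 and x_j = m_j > 0 for j = 0,…,N−1 with x_j and y_j similarly ordered as multisets: there is a single permutation arranging both in non-decreasing order simultaneously (y_j and x_j are paired size-wise, i.e. y_i ≤ y_j ⟺ x_i ≤ x_j). Then ∏_{j=0}^{N-1}(x_{j-1} + y_j) ≥ ∏_{j=0}^{N-1}(x_j + y_j), where indices are taken mod N, i.e. the cyclic shifted pairing never produces a smaller product than the aligned pairing. -/
import Mathlib


open Finset

lemma key_aux (N : ℕ) (x y : Fin N → ℝ) (hx : ∀ j, 0 < x j) (hy : ∀ j, 0 < y j)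
    (hord : ∀ i j, y i ≤ y j ↔ x i ≤ x j) :
    ∀ (n : ℕ) (σ : Equiv.Perm (Fin N)), σ.support.card ≤ n →
      ∏ j, (x j + y j) ≤ ∏ j, (x (σ j) + y j) := by
  intro n
  induction n with
  | zero =>
    intro σ hσ
    have hσ1 : σ = 1 := by
      rw [← Equiv.Perm.support_eq_empty_iff]
      exact Finset.card_eq_zero.mp (Nat.le_zero.mp hσ)
    subst hσ1; simp
  | succ n ih =>
    intro σ hσ
    by_cases hid : σ = 1
    · subst hid; simp
    · have hne : σ.support.Nonempty := by
        rw [Finset.nonempty_iff_ne_empty]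
        simpa [Equiv.Perm.support_eq_empty_iff] using hid
      obtain ⟨i, hi, hmin⟩ := Finset.exists_min_image σ.support y hne
      set m := σ⁻¹ i with hm
      have hmi : σ m = i := by simp [hm]
      have hmi' : m ≠ i := by
        intro h
        exact (Equiv.Perm.mem_support.mp hi) (h ▸ hmi)
      have hm_supp : m ∈ σ.support := by
        rw [Equiv.Perm.mem_support, hmi]
        exact fun h => hmi' h.symm
      set σ' : Equiv.Perm (Fin N) := σ * Equiv.swap i m with hσ'
      have hσ'i : σ' i = i := by
        simp [hσ', Equiv.Perm.mul_apply, Equiv.swap_apply_left, hmi]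
      have hσ'm : σ' m = σ i := by
        simp [hσ', Equiv.Perm.mul_apply, Equiv.swap_apply_right]
      have hσ'other : ∀ k, k ≠ i → k ≠ m → σ' k = σ k := by
        intro k hk1 hk2
        simp [hσ', Equiv.Perm.mul_apply, Equiv.swap_apply_of_ne_of_ne hk1 hk2]
      have hsub : σ'.support ⊆ σ.support.erase i := by
        intro k hk
        rw [Equiv.Perm.mem_support] at hk
        rcases eq_or_ne k i with rfl | hk1
        · exact absurd hσ'i hk
        rcases eq_or_ne k m with rfl | hk2
        · exact Finset.mem_erase.mpr ⟨hk1, hm_supp⟩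
        · rw [hσ'other k hk1 hk2] at hk
          exact Finset.mem_erase.mpr ⟨hk1, Equiv.Perm.mem_support.mpr hk⟩
      have hcard : σ'.support.card ≤ n := by
        have h1 := Finset.card_le_card hsub
        have h2 : (σ.support.erase i).card = σ.support.card - 1 :=
          Finset.card_erase_of_mem hi
        have h3 : 1 ≤ σ.support.card := Finset.card_pos.mpr hne
        omega
      have hIH := ih σ' hcard
      refine hIH.trans ?_
      -- compare ∏ (x (σ' j) + y j) ≤ ∏ (x (σ j) + y j)
      have hmem : m ∈ univ.erase i := Finset.mem_erase.mpr ⟨hmi', Finset.mem_univ m⟩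
      have hsplit : ∀ h : Fin N → ℝ, ∏ j, h j =
          h i * h m * ∏ j ∈ (univ.erase i).erase m, h j := by
        intro h
        rw [← Finset.mul_prod_erase univ h (Finset.mem_univ i),
            ← Finset.mul_prod_erase (univ.erase i) h hmem, mul_assoc]
      rw [hsplit (fun j => x (σ' j) + y j), hsplit (fun j => x (σ j) + y j)]
      have htail : ∏ j ∈ (univ.erase i).erase m, (x (σ' j) + y j)
          = ∏ j ∈ (univ.erase i).erase m, (x (σ j) + y j) := by
        refine Finset.prod_congr rfl ?_
        intro k hk
        have hk' := Finset.mem_erase.mp hk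
        rw [hσ'other k (Finset.mem_erase.mp hk'.2).1 hk'.1]
      rw [htail]
      have htailpos : 0 ≤ ∏ j ∈ (univ.erase i).erase m, (x (σ j) + y j) :=
        Finset.prod_nonneg fun k _ => le_of_lt (add_pos (hx _) (hy _))
      refine mul_le_mul_of_nonneg_right ?_ htailpos
      rw [hσ'i, hσ'm, hmi]
      -- (x i + y i) * (x (σ i) + y m) ≤ (x (σ i) + y i) * (x i + y m)
      have hyi : y i ≤ y (σ i) := hmin (σ i) (Equiv.Perm.apply_mem_support.mpr hi)
      have hxi : x i ≤ x (σ i) := (hord i (σ i)).mp hyi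
      have hym : y i ≤ y m := hmin m hm_supp
      nlinarith [mul_nonneg (sub_nonneg.mpr hxi) (sub_nonneg.mpr hym)]

theorem aligned_pairing_minimizes_cyclic
    (N : ℕ) [NeZero N] (σR2 : ℝ) (hσR2 : 0 < σR2)
    (σsq : Fin N → ℝ) (hσsq : ∀ j, 0 < σsq j)
    (x y : Fin N → ℝ)
    (hy : y = fun j => σsq j / σR2)
    (hx : ∀ j, 0 < x j)
    (hord : ∀ i j, y i ≤ y j ↔ x i ≤ x j) :
    (∏ j, (x j + y j)) ≤ ∏ j, (x (j - 1) + y j) := by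
  have hypos : ∀ j, 0 < y j := by
    intro j; rw [hy]; exact div_pos (hσsq j) hσR2
  let σc : Equiv.Perm (Fin N) := Equiv.subRight (1 : Fin N)
  have := key_aux N x y hx hypos hord σc.support.card σc le_rfl
  simpa [σc, Equiv.subRight] using this
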